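/- Let a, b, c, d be real constants with a, b, c > 0 and b² - 4ac < 0, and let y : [0,∞) → ℝ be a nonnegative C² function satisfying a y'' + b y' + c y + d ≤ 0 on (0,∞). If y(0) < -4ad/b² and (b/(2a)) y(0) + y'(0) + 2d/b < 0, then y(t) < -4ad/b² for all t ≥ 0. -/

import Mathlib

theorem second_order_gronwall_underdamped (a b c d : ℝ)
    (ha : 0 < a) (hb : 0 < b) (hc : 0 < c) (hdisc : b^2 - 4*a*c < 0)
    (y : ℝ → ℝ) (hy : ContDiff ℝ 2 y) (hynn : ∀ t ≥ (0:ℝ), 0 ≤ y t)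
    (hineq : ∀ t > (0:ℝ), a * deriv (deriv y) t + b * deriv y t + c * y t + d ≤ 0)
    (h1 : y 0 < -(4*a*d)/b^2)
    (h2 : (b/(2*a)) * y 0 + deriv y 0 + 2*d/b < 0) :
    ∀ t ≥ (0:ℝ), y t < -(4*a*d)/b^2 := by
  have ha' : (a:ℝ) ≠ 0 := ne_of_gt ha
  have hb' : (b:ℝ) ≠ 0 := ne_of_gt hb
  set L : ℝ := b/(2*a) with hLdef
  have hL : 0 < L := div_pos hb (by linarith)
  have hdy : Differentiable ℝ y := hy.differentiable (by norm_num)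
  have hcd : ContDiff ℝ 1 (deriv y) := by
    have h22 : ContDiff ℝ ((1:ℕ) + 1) y := by exact_mod_cast hy
    exact (contDiff_succ_iff_deriv.mp h22).2.2
  have hdy2 : Differentiable ℝ (deriv y) := hcd.differentiable (by norm_num)
  set v : ℝ → ℝ := fun t => L * y t + deriv y t + 2*d/b with hvdef
  have hvderiv : ∀ t : ℝ, HasDerivAt v (L * deriv y t + deriv (deriv y) t) t := by
    intro t
    exact (((hdy t).hasDerivAt.const_mul L).add (hdy2 t).hasDerivAt).add_const _
  have hexp : ∀ t : ℝ, HasDerivAt (fun s : ℝ => Real.exp (L*s)) (Real.exp (L*t) * L) t := by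
    intro t
    have : HasDerivAt (fun s : ℝ => L * s) (L * 1) t := (hasDerivAt_id t).const_mul L
    simpa using this.exp
  set g : ℝ → ℝ := fun t => Real.exp (L*t) * v t with hgdef
  have hgderiv : ∀ t : ℝ,
      HasDerivAt g (Real.exp (L*t) * (L * v t + (L * deriv y t + deriv (deriv y) t))) t := by
    intro t
    have := (hexp t).mul (hvderiv t)
    refine this.congr_deriv ?_
    ring
  have hvcont : Continuous v :=
    ((continuous_const.mul hdy.continuous).add hdy2.continuous).add continuous_const
  have hgcont : Continuous g :=
    (Real.continuous_exp.comp (continuous_const.mul continuous_id)).mul hvcont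
  have hganti : AntitoneOn g (Set.Ici (0:ℝ)) := by
    apply antitoneOn_of_deriv_nonpos (convex_Ici 0) hgcont.continuousOn
    · intro t _
      exact (hgderiv t).differentiableAt.differentiableWithinAt
    · intro t ht
      rw [interior_Ici] at ht
      rw [(hgderiv t).deriv]
      have h3 := hineq t ht
      have h4 := hynn t (le_of_lt ht)
      have hE : (4*a^2*b) * (L * v t + (L * deriv y t + deriv (deriv y) t))
          = 4*a*b*(a * deriv (deriv y) t + b * deriv y t + c * y t + d)
            + b*(b^2-4*a*c)*(y t) := by
        simp only [hvdef, hLdef]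
        field_simp
        ring
      have hkey : (4*a^2*b) * (L * v t + (L * deriv y t + deriv (deriv y) t)) ≤ 0 := by
        rw [hE]
        nlinarith [mul_pos ha hb, mul_nonneg h4 hb.le, mul_nonneg (mul_nonneg h4 hb.le) hb.le]
      have hC : (0:ℝ) < 4*a^2*b := by positivity
      have hE0 : L * v t + (L * deriv y t + deriv (deriv y) t) ≤ 0 := by
        by_contra hcon
        push_neg at hcon
        nlinarith [mul_pos hC hcon]
      exact mul_nonpos_of_nonneg_of_nonpos (Real.exp_pos _).le hE0
  have hv0 : v 0 < 0 := by
    simpa [hvdef, hLdef] using h2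
  have hvneg : ∀ t ≥ (0:ℝ), v t < 0 := by
    intro t ht
    have := hganti (Set.self_mem_Ici) (Set.mem_Ici.mpr ht) ht
    have hg0 : g 0 = v 0 := by simp [hgdef]
    have hgt : g t < 0 := by rw [hg0] at this; linarith
    by_contra hcon
    push_neg at hcon
    have : 0 ≤ g t := mul_nonneg (Real.exp_pos _).le hcon
    linarith
  -- step 2
  set K : ℝ := -(4*a*d)/b^2 with hKdef
  set h : ℝ → ℝ := fun t => Real.exp (L*t) * (y t - K) with hhdef
  have hhderiv : ∀ t : ℝ, HasDerivAt h (Real.exp (L*t) * v t) t := by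
    intro t
    have := (hexp t).mul ((hdy t).hasDerivAt.sub_const K)
    refine this.congr_deriv ?_
    simp only [hvdef, hLdef, hKdef]
    field_simp
    ring
  have hhcont : Continuous h :=
    (Real.continuous_exp.comp (continuous_const.mul continuous_id)).mul
      (hdy.continuous.sub continuous_const)
  have hhanti : AntitoneOn h (Set.Ici (0:ℝ)) := by
    apply antitoneOn_of_deriv_nonpos (convex_Ici 0) hhcont.continuousOn
    · intro t _
      exact (hhderiv t).differentiableAt.differentiableWithinAt
    · intro t ht
      rw [interior_Ici] at ht
      rw [(hhderiv t).deriv]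
      exact mul_nonpos_of_nonneg_of_nonpos (Real.exp_pos _).le
        (le_of_lt (hvneg t (le_of_lt ht)))
  intro t ht
  have hle := hhanti (Set.self_mem_Ici) (Set.mem_Ici.mpr ht) ht
  have hh0 : h 0 = y 0 - K := by simp [hhdef]
  have hht : h t < 0 := by rw [hh0] at hle; linarith
  have hexp_pos := Real.exp_pos (L*t)
  by_contra hcon
  push_neg at hcon
  have : 0 ≤ h t := mul_nonneg hexp_pos.le (by linarith)
  linarith
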